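/- Let k be an algebraically closed field of characteristic p and n ≥ 1; set e := p^{n−1}·(p−1). If f ∈ k⟦u⟧ satisfies f^p = u^e·f, then f = c·u^{p^{n−1}} for some c ∈ k with c^p = c (so c lies in the prime subfield 𝔽_p of k). In particular, the set of solutions of f^p = u^e·f in k⟦u⟧ is the 𝔽_p-line 𝔽_p·u^{p^{n−1}}. -/

import Mathlib

open PowerSeries

private lemma order_pow' {R : Type*} [CommRing R] [IsDomain R] (f : PowerSeries R) (m : ℕ) :
    (f ^ m).order = m • f.order := by
  induction m with
  | zero => simp [PowerSeries.order_one]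
  | succ t ih => rw [pow_succ, PowerSeries.order_mul, ih, succ_nsmul]

/-- A power series fixed by Frobenius is a constant fixed by Frobenius. -/
private lemma eq_C_of_pow_char_eq {p : ℕ} [Fact p.Prime] {k : Type*} [Field k] [CharP k p]
    (g : PowerSeries k) (hg : g ^ p = g) :
    ∃ c : k, c ^ p = c ∧ g = PowerSeries.C c := by
  haveI : CharP (PowerSeries k) p := charP_of_injective_ringHom PowerSeries.C_injective p
  have hp := Fact.out (p := p.Prime)
  set c := PowerSeries.constantCoeff g with hc
  have hcp : c ^ p = c := by
    rw [hc, ← map_pow, hg]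
  refine ⟨c, hcp, ?_⟩
  set h := g - PowerSeries.C c with hh
  have hhp : h ^ p = h := by
    rw [hh, sub_pow_char, hg, ← map_pow, hcp]
  have hh0 : PowerSeries.coeff 0 h = 0 := by
    simp [hh, hc, PowerSeries.coeff_zero_eq_constantCoeff]
  have : h = 0 := by
    by_contra h0
    obtain ⟨d, hd⟩ := WithTop.ne_top_iff_exists.mp
      ((PowerSeries.order_eq_top (φ := h)).not.mpr h0)
    have horder : (h ^ p).order = h.order := by rw [hhp]
    rw [order_pow', ← hd] at horder
    have : (p * d : ℕ) = (d : ℕ∞) := by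
      rw [Nat.cast_mul, ← nsmul_eq_mul]
      exact_mod_cast horder
    have hd0 : d = 0 := by
      have := Nat.cast_injective (R := ℕ∞) this
      nlinarith [hp.two_le]
    have hord0 : h.order = (0 : ℕ) := by rw [← hd, hd0]; rfl
    exact (PowerSeries.order_eq_nat.mp hord0).1 hh0
  rw [← sub_eq_zero, ← hh, this]

theorem stmt15 (p : ℕ) [Fact p.Prime] (k : Type*) [Field k] [IsAlgClosed k] [CharP k p]
    (n : ℕ) (hn : 1 ≤ n) (f : PowerSeries k)
    (hf : f ^ p = (PowerSeries.X : PowerSeries k) ^ (p ^ (n - 1) * (p - 1)) * f) :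
    ∃ c : k, c ^ p = c ∧ f = PowerSeries.C c * (PowerSeries.X : PowerSeries k) ^ p ^ (n - 1) := by
  have hp := Fact.out (p := p.Prime)
  set q := p ^ (n - 1) with hq
  by_cases hf0 : f = 0
  · exact ⟨0, by simp [hp.ne_zero], by simp [hf0]⟩
  -- order computation
  obtain ⟨d, hd⟩ := WithTop.ne_top_iff_exists.mp
    ((PowerSeries.order_eq_top (φ := f)).not.mpr hf0)
  have horder : (f ^ p).order = ((q * (p - 1) : ℕ) : ℕ∞) + f.order := by
    rw [hf, PowerSeries.order_mul, PowerSeries.order_X_pow]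
  rw [order_pow', ← hd] at horder
  have hnat : p * d = q * (p - 1) + d := by
    have : ((p * d : ℕ) : ℕ∞) = ((q * (p - 1) + d : ℕ) : ℕ∞) := by
      push_cast
      rw [← nsmul_eq_mul]
      exact_mod_cast horder
    exact_mod_cast this
  have hdq : d = q := by
    have h2 : 2 ≤ p := hp.two_le
    have : (p - 1) * d = (p - 1) * q := by
      have hps : p - 1 + 1 = p := Nat.succ_pred_eq_of_pos hp.pos
      nlinarith [hnat, hps]
    exact Nat.eq_of_mul_eq_mul_left (by omega) this
  -- factor out X^q
  have hdvd : (PowerSeries.X : PowerSeries k) ^ q ∣ f := by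
    rw [PowerSeries.X_pow_dvd_iff]
    intro m hm
    apply PowerSeries.coeff_of_lt_order
    rw [← hd, hdq]
    exact Nat.cast_lt.mpr hm
  obtain ⟨g, hg⟩ := hdvd
  have hgp : g ^ p = g := by
    have hX : (PowerSeries.X : PowerSeries k) ^ (q * p) ≠ 0 :=
      pow_ne_zero _ PowerSeries.X_ne_zero
    apply mul_left_cancel₀ hX
    have key : (PowerSeries.X : PowerSeries k) ^ (q * p) * g ^ p = f ^ p := by
      rw [hg, mul_pow, ← pow_mul]
    have hexp : q * (p - 1) + q = q * p := by
      have h1 : p - 1 + 1 = p := by have := hp.pos; omega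
      calc q * (p - 1) + q = q * ((p - 1) + 1) := by ring
        _ = q * p := by rw [h1]
    rw [key, hf, hg, ← mul_assoc, ← pow_add, hexp]
  obtain ⟨c, hcp, hgc⟩ := eq_C_of_pow_char_eq g hgp
  exact ⟨c, hcp, by rw [hg, hgc, mul_comm]⟩
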